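/- Let G be a connected finite simple graph and let u and v be distinct vertices of G. Then S(u,v) = {u,v} if and only if either uv is an edge of G or there exist two internally disjoint shortest u,v-paths in G (that is, two shortest u,v-paths whose vertex sets intersect only in {u,v}). -/

import Mathlib

/-- The interval `I(u,v)`: vertices lying on some shortest `u,v`-path. -/
def SimpleGraph.interval {V : Type*} (G : SimpleGraph V) (u v : V) : Set V :=
  {x | ∃ p : G.Walk u v, p.IsPath ∧ p.length = G.dist u v ∧ x ∈ p.support}

/-- The stress interval `S(u,v)`: vertices lying on every shortest `u,v`-path
(empty if `u` and `v` are in different components). -/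
def SimpleGraph.stressInterval {V : Type*} (G : SimpleGraph V) (u v : V) : Set V :=
  {x | G.Reachable u v ∧
    ∀ p : G.Walk u v, p.IsPath → p.length = G.dist u v → x ∈ p.support}

/-- A set of vertices is stress convex if it contains the stress interval
between any two of its elements. -/
def SimpleGraph.IsStressConvex {V : Type*} (G : SimpleGraph V) (U : Set V) : Prop :=
  ∀ ⦃u⦄, u ∈ U → ∀ ⦃v⦄, v ∈ U → G.stressInterval u v ⊆ U

namespace StressAux

open SimpleGraph

variable {V : Type*} {G : SimpleGraph V} {u v : V}

lemma geo_getVert (hG : G.Connected) (q : G.Walk u v) (hq : q.length = G.dist u v)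
    {m : ℕ} (hm : m ≤ q.length) :
    G.dist u (q.getVert m) = m ∧ G.dist (q.getVert m) v = q.length - m := by
  have h1 : ∀ m, m ≤ q.length → G.dist u (q.getVert m) ≤ m := by
    intro m
    induction m with
    | zero => intro _; simp [Walk.getVert_zero]
    | succ m ih =>
      intro hm
      have h' := ih (by omega)
      have hadj : G.Adj (q.getVert m) (q.getVert (m+1)) := q.adj_getVert_succ (by omega)
      have ht := hG.dist_triangle (u := u) (v := q.getVert m) (w := q.getVert (m+1))
      have h1 : G.dist (q.getVert m) (q.getVert (m+1)) = 1 :=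
        SimpleGraph.dist_eq_one_iff_adj.mpr hadj
      omega
  have h2 : ∀ k, k ≤ q.length → G.dist (q.getVert (q.length - k)) v ≤ k := by
    intro k
    induction k with
    | zero => intro _; simp [Walk.getVert_length, SimpleGraph.dist_self]
    | succ k ih =>
      intro hk
      have h' := ih (by omega)
      have hlt : q.length - (k+1) < q.length := by omega
      have hadj : G.Adj (q.getVert (q.length - (k+1))) (q.getVert (q.length - (k+1) + 1)) :=
        q.adj_getVert_succ hlt
      have heq : q.length - (k+1) + 1 = q.length - k := by omega
      rw [heq] at hadj
      have ht := hG.dist_triangle (u := q.getVert (q.length - (k+1)))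
        (v := q.getVert (q.length - k)) (w := v)
      have h1 : G.dist (q.getVert (q.length - (k+1))) (q.getVert (q.length - k)) = 1 :=
        SimpleGraph.dist_eq_one_iff_adj.mpr hadj
      omega
  have ha := h1 m hm
  have hb := h2 (q.length - m) (by omega)
  rw [show q.length - (q.length - m) = m by omega] at hb
  have ht := hG.dist_triangle (u := u) (v := q.getVert m) (w := v)
  omega

/-- a single step of the geodesic DAG from `u` to `v`. -/
def stepG (G : SimpleGraph V) (u v : V) (a b : V) : Prop :=
  G.Adj a b ∧ G.dist u a + G.dist a v = G.dist u v ∧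
  G.dist u b + G.dist b v = G.dist u v ∧ G.dist u b = G.dist u a + 1

lemma geo_step (hG : G.Connected) (q : G.Walk u v) (hq : q.length = G.dist u v)
    {m : ℕ} (hm : m < q.length) : stepG G u v (q.getVert m) (q.getVert (m + 1)) := by
  obtain ⟨ha1, ha2⟩ := geo_getVert hG q hq (m := m) (by omega)
  obtain ⟨hb1, hb2⟩ := geo_getVert hG q hq (m := m + 1) (by omega)
  exact ⟨q.adj_getVert_succ hm, by omega, by omega, by omega⟩

lemma walk_of_chain (f : ℕ → V) (hf0 : f 0 = u) (n : ℕ)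
    (hstep : ∀ m < n, G.Adj (f m) (f (m + 1))) :
    ∃ P : G.Walk u (f n), P.length = n ∧ ∀ x, x ∈ P.support ↔ ∃ m ≤ n, f m = x := by
  induction n with
  | zero =>
    subst hf0
    exact ⟨Walk.nil, rfl, by simp [eq_comm]⟩
  | succ n ih =>
    obtain ⟨P, hlen, hsupp⟩ := ih (fun m hm => hstep m (by omega))
    refine ⟨P.concat (hstep n (by omega)), ?_, ?_⟩
    · simp [Walk.length_concat, hlen]
    · intro x
      rw [Walk.support_concat, List.mem_append]
      constructor
      · rintro (hx | hx)
        · obtain ⟨m, hm, rfl⟩ := (hsupp x).mp hx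
          exact ⟨m, by omega, rfl⟩
        · simp only [List.mem_singleton] at hx
          exact ⟨n + 1, le_refl _, hx.symm⟩
      · rintro ⟨m, hm, rfl⟩
        rcases Nat.lt_or_ge m (n+1) with h | h
        · exact Or.inl ((hsupp _).mpr ⟨m, by omega, rfl⟩)
        · have : m = n + 1 := by omega
          subst this; simp

lemma decomp (hG : G.Connected) (huv : u ≠ v) (hd2 : 2 ≤ G.dist u v) (g : V → V → Prop)
    (hstep : ∀ a b, g a b → stepG G u v a b)
    (hP1 : ∃ b1 b2, b1 ≠ b2 ∧ g u b1 ∧ g u b2)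
    (hP2 : ∀ w a, w ≠ u → w ≠ v → g a w → ∃ b, g w b)
    (hP3 : ∀ w a a', w ≠ v → g a w → g a' w → a = a') :
    ∃ p q : G.Walk u v, p.IsPath ∧ q.IsPath ∧
      p.length = G.dist u v ∧ q.length = G.dist u v ∧ p ≠ q ∧
      (∀ x : V, (x ∈ p.support ∧ x ∈ q.support) ↔ (x = u ∨ x = v)) := by
  classical
  have layer : ∀ (f : ℕ → V), f 0 = u → ∀ i, (∀ m < i, g (f m) (f (m+1))) →
      ∀ m ≤ i, G.dist u (f m) = m ∧ G.dist u (f m) + G.dist (f m) v = G.dist u v := by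
    intro f hf0 i hch m
    induction m with
    | zero => intro _; rw [hf0]; simp [SimpleGraph.dist_self]
    | succ m ihm =>
      intro hm
      obtain ⟨h1, h2⟩ := ihm (by omega)
      obtain ⟨_, hsa, hsb, hsd⟩ := hstep _ _ (hch m (by omega))
      exact ⟨by omega, by omega⟩
  have key : ∀ i, 1 ≤ i → i ≤ G.dist u v → ∃ f₁ f₂ : ℕ → V, f₁ 0 = u ∧ f₂ 0 = u ∧
      (∀ m < i, g (f₁ m) (f₁ (m+1))) ∧ (∀ m < i, g (f₂ m) (f₂ (m+1))) ∧
      (∀ m, 1 ≤ m → m ≤ i → m < G.dist u v → f₁ m ≠ f₂ m) := by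
    intro i
    induction i with
    | zero => omega
    | succ i ih =>
      intro _ hle
      rcases Nat.eq_zero_or_pos i with rfl | hi
      · obtain ⟨b1, b2, hne, hb1, hb2⟩ := hP1
        refine ⟨fun m => if m = 0 then u else b1, fun m => if m = 0 then u else b2,
          by simp, by simp, ?_, ?_, ?_⟩
        · intro m hm; interval_cases m; simpa using hb1
        · intro m hm; interval_cases m; simpa using hb2
        · intro m h1 h2 _; interval_cases m; simpa using hne
      · obtain ⟨f₁, f₂, hf10, hf20, hch1, hch2, hdist⟩ := ih (by omega) (by omega)
        have hlay1 := layer f₁ hf10 i hch1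
        have hlay2 := layer f₂ hf20 i hch2
        have ha1 : G.dist u (f₁ i) = i := (hlay1 i (le_refl _)).1
        have ha2 : G.dist u (f₂ i) = i := (hlay2 i (le_refl _)).1
        have hne1u : f₁ i ≠ u := fun h => by rw [h] at ha1; simp [SimpleGraph.dist_self] at ha1; omega
        have hne1v : f₁ i ≠ v := fun h => by rw [h] at ha1; omega
        have hne2u : f₂ i ≠ u := fun h => by rw [h] at ha2; simp [SimpleGraph.dist_self] at ha2; omega
        have hne2v : f₂ i ≠ v := fun h => by rw [h] at ha2; omega
        have hin1 : g (f₁ (i-1)) (f₁ i) := by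
          have := hch1 (i-1) (by omega)
          rwa [show i - 1 + 1 = i by omega] at this
        have hin2 : g (f₂ (i-1)) (f₂ i) := by
          have := hch2 (i-1) (by omega)
          rwa [show i - 1 + 1 = i by omega] at this
        obtain ⟨b, hb⟩ := hP2 _ _ hne1u hne1v hin1
        obtain ⟨b', hb'⟩ := hP2 _ _ hne2u hne2v hin2
        refine ⟨fun m => if m ≤ i then f₁ m else b, fun m => if m ≤ i then f₂ m else b',
          by simp [hf10], by simp [hf20], ?_, ?_, ?_⟩
        · intro m hm
          rcases Nat.lt_or_ge m i with h | h
          · simpa [show m ≤ i by omega, show m + 1 ≤ i by omega] using hch1 m h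
          · have hmi : m = i := by omega
            subst hmi
            simpa [show ¬ (m + 1 ≤ m) by omega] using hb
        · intro m hm
          rcases Nat.lt_or_ge m i with h | h
          · simpa [show m ≤ i by omega, show m + 1 ≤ i by omega] using hch2 m h
          · have hmi : m = i := by omega
            subst hmi
            simpa [show ¬ (m + 1 ≤ m) by omega] using hb'
        · intro m h1 h2 h3
          rcases Nat.lt_or_ge m (i+1) with h | h
          · simpa [show m ≤ i by omega] using hdist m h1 (by omega) h3
          · have hmi : m = i + 1 := by omega
            subst hmi
            simp only [show ¬ (i + 1 ≤ i) by omega, if_false]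
            intro hbb
            subst hbb
            have hbv : b ≠ v := by
              intro hv
              have := (hstep _ _ hb).2.2.2
              rw [hv] at this
              omega
            exact hdist i (by omega) (le_refl _) (by omega) (hP3 b _ _ hbv hb hb')
  obtain ⟨f₁, f₂, hf10, hf20, hch1, hch2, hdist⟩ := key (G.dist u v) (by omega) (le_refl _)
  have hlay1 := layer f₁ hf10 _ hch1
  have hlay2 := layer f₂ hf20 _ hch2
  have hend1 : f₁ (G.dist u v) = v := by
    have h := hlay1 _ (le_refl _)
    have : G.dist (f₁ (G.dist u v)) v = 0 := by omega
    exact (hG.dist_eq_zero_iff).mp this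
  have hend2 : f₂ (G.dist u v) = v := by
    have h := hlay2 _ (le_refl _)
    have : G.dist (f₂ (G.dist u v)) v = 0 := by omega
    exact (hG.dist_eq_zero_iff).mp this
  obtain ⟨P₀, hPlen, hPsupp⟩ := walk_of_chain f₁ hf10 (G.dist u v)
    (fun m hm => (hstep _ _ (hch1 m hm)).1)
  obtain ⟨Q₀, hQlen, hQsupp⟩ := walk_of_chain f₂ hf20 (G.dist u v)
    (fun m hm => (hstep _ _ (hch2 m hm)).1)
  refine ⟨P₀.copy rfl hend1, Q₀.copy rfl hend2, ?_, ?_, ?_, ?_, ?_, ?_⟩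
  · exact Walk.isPath_of_length_eq_dist _ (by simpa using hPlen)
  · exact Walk.isPath_of_length_eq_dist _ (by simpa using hQlen)
  · simpa using hPlen
  · simpa using hQlen
  · intro he
    have h21 : f₂ 1 ∈ (Q₀.copy rfl hend2).support := by
      rw [Walk.support_copy]
      exact (hQsupp _).mpr ⟨1, by omega, rfl⟩
    rw [← he, Walk.support_copy] at h21
    obtain ⟨m, hm, hmeq⟩ := (hPsupp _).mp h21
    have hm1 : G.dist u (f₁ m) = m := (hlay1 m hm).1
    have hm2 : G.dist u (f₂ 1) = 1 := (hlay2 1 (by omega)).1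
    rw [hmeq] at hm1
    have : m = 1 := by omega
    subst this
    exact hdist 1 (le_refl _) (by omega) (by omega) hmeq
  · intro x
    simp only [Walk.support_copy]
    constructor
    · rintro ⟨hx1, hx2⟩
      obtain ⟨m1, hm1, he1⟩ := (hPsupp x).mp hx1
      obtain ⟨m2, hm2, he2⟩ := (hQsupp x).mp hx2
      have d1 : G.dist u (f₁ m1) = m1 := (hlay1 m1 hm1).1
      have d2 : G.dist u (f₂ m2) = m2 := (hlay2 m2 hm2).1
      rw [he1] at d1; rw [he2] at d2
      have hm12 : m1 = m2 := by omega
      subst hm12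
      rcases Nat.eq_zero_or_pos m1 with rfl | hpos
      · left; rw [← he1, hf10]
      · rcases Nat.lt_or_ge m1 (G.dist u v) with hlt | hge
        · exact absurd (he1.trans he2.symm) (hdist m1 hpos hm1 hlt)
        · right
          have : m1 = G.dist u v := by omega
          subst this
          rw [← he1, hend1]
    · rintro (hx | hx)
      · exact ⟨(hPsupp _).mpr ⟨0, by omega, hf10.trans hx.symm⟩,
          (hQsupp _).mpr ⟨0, by omega, hf20.trans hx.symm⟩⟩
      · exact ⟨(hPsupp _).mpr ⟨G.dist u v, le_refl _, hend1.trans hx.symm⟩,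
          (hQsupp _).mpr ⟨G.dist u v, le_refl _, hend2.trans hx.symm⟩⟩

/-- edge of the fixed geodesic `p0`. -/
def pE (p0 : G.Walk u v) (a b : V) : Prop :=
  ∃ j, j + 1 ≤ p0.length ∧ p0.getVert j = a ∧ p0.getVert (j + 1) = b

/-- interior vertex of the fixed geodesic `p0`. -/
def interiorP (p0 : G.Walk u v) (a : V) : Prop :=
  ∃ j, 0 < j ∧ j < p0.length ∧ p0.getVert j = a

/-- The residual digraph on `V × Bool` relative to the geodesic `p0`. -/
def res (G : SimpleGraph V) (u v : V) (p0 : G.Walk u v) (s t : V × Bool) : Prop :=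
  (s.2 = true ∧ t.2 = false ∧
    ((stepG G u v s.1 t.1 ∧ ¬ pE p0 s.1 t.1) ∨ (s.1 = t.1 ∧ interiorP p0 s.1))) ∨
  (s.2 = false ∧ t.2 = true ∧
    ((s.1 = t.1 ∧ ¬ interiorP p0 s.1) ∨ pE p0 t.1 s.1))

section cut

variable (hG : G.Connected) (huv : u ≠ v) (p0 : G.Walk u v)

lemma cut_case (hG : G.Connected) (huv : u ≠ v) (p0 : G.Walk u v)
    (hp0 : p0.length = G.dist u v) (hd2 : 2 ≤ G.dist u v)
    (hNR : ¬ Relation.ReflTransGen (res G u v p0) (u, true) (v, false)) :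
    ∃ c, c ≠ u ∧ c ≠ v ∧ ∀ q : G.Walk u v, q.length = G.dist u v → c ∈ q.support := by
  classical
  set R : V × Bool → Prop := Relation.ReflTransGen (res G u v p0) (u, true) with hRdef
  have hxd : ∀ j, j ≤ p0.length →
      G.dist u (p0.getVert j) = j ∧ G.dist (p0.getVert j) v = p0.length - j :=
    fun j hj => geo_getVert hG p0 hp0 hj
  have hx0 : p0.getVert 0 = u := p0.getVert_zero
  have hxlen : p0.getVert p0.length = v := p0.getVert_length
  have hlen2 : 2 ≤ p0.length := by omega
  have xinj : ∀ j k, j ≤ p0.length → k ≤ p0.length → p0.getVert j = p0.getVert k → j = k := by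
    intro j k hj hk he
    have h1 := (hxd j hj).1
    have h2 := (hxd k hk).1
    rw [he] at h1; omega
  have arc3 : ∀ j, j + 1 ≤ p0.length →
      res G u v p0 (p0.getVert (j+1), false) (p0.getVert j, true) :=
    fun j hj => Or.inr ⟨rfl, rfl, Or.inr ⟨j, hj, rfl, rfl⟩⟩
  have arc4 : ∀ j, 0 < j → j < p0.length →
      res G u v p0 (p0.getVert j, true) (p0.getVert j, false) :=
    fun j h0 hj => Or.inl ⟨rfl, rfl, Or.inr ⟨rfl, ⟨j, h0, hj, rfl⟩⟩⟩
  have arc2 : ∀ a : V, ¬ interiorP p0 a → res G u v p0 (a, false) (a, true) :=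
    fun a h => Or.inr ⟨rfl, rfl, Or.inl ⟨rfl, h⟩⟩
  have hRu : R (u, true) := Relation.ReflTransGen.refl
  have hnRvt : ¬ R (v, true) := by
    intro h
    rcases Relation.ReflTransGen.cases_tail h with heq | ⟨s, hRs, hst⟩
    · rw [Prod.mk.injEq] at heq
      exact huv heq.1.symm
    · rcases hst with ⟨_, h2, _⟩ | ⟨h1, _, hor⟩
      · simp at h2
      · rcases hor with ⟨hsv, _⟩ | ⟨k, hk, hkv, _⟩
        · apply hNR
          have : s = (v, false) := Prod.ext hsv h1
          rwa [this] at hRs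
        · have : k = p0.length := xinj k p0.length (by omega) (le_refl _) (by rw [hkv, hxlen])
          omega
  -- the largest index on p0 whose "out" state is reachable
  set P : ℕ → Prop := fun j => R (p0.getVert j, true) with hPdef
  have hP0 : P 0 := by rw [hPdef]; simpa [hx0] using hRu
  set js : ℕ := Nat.findGreatest P p0.length with hjsdef
  have hjs : P js := Nat.findGreatest_spec (Nat.zero_le _) hP0
  have hjsle : js ≤ p0.length := Nat.findGreatest_le _
  have hmax : ∀ m, m ≤ p0.length → P m → m ≤ js := fun m h hp => Nat.le_findGreatest h hp
  have hjslt : js < p0.length := by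
    rcases Nat.lt_or_ge js p0.length with h | h
    · exact h
    · exfalso
      have : js = p0.length := by omega
      rw [hPdef, this, hxlen] at hjs
      exact hnRvt hjs
  have hRdown : ∀ j, j + 1 ≤ p0.length → R (p0.getVert (j+1), false) → R (p0.getVert j, true) :=
    fun j hj h => h.tail (arc3 j hj)
  have hRj : ∀ j, j ≤ js → R (p0.getVert j, true) := by
    have aux : ∀ k, R (p0.getVert (js - k), true) := by
      intro k
      induction k with
      | zero => exact hjs
      | succ k ihk =>
        by_cases h0 : js - k = 0
        · rw [show js - (k+1) = 0 by omega]
          rwa [h0] at ihk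
        · have h1 : R (p0.getVert (js - k), false) :=
            ihk.tail (arc4 (js - k) (by omega) (by omega))
          have h2 : R (p0.getVert (js - k - 1), true) := by
            apply hRdown (js - k - 1) (by omega)
            rwa [show js - k - 1 + 1 = js - k by omega]
          rwa [show js - (k+1) = js - k - 1 by omega]
    intro j hj
    have := aux (js - j)
    rwa [show js - (js - j) = j by omega] at this
  have hnot2 : ∀ j, js + 2 ≤ j → j ≤ p0.length → ¬ R (p0.getVert j, false) := by
    intro j h1 h2 h
    have h3 : R (p0.getVert (j-1), true) := by
      apply hRdown (j-1) (by omega)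
      rwa [show j - 1 + 1 = j by omega]
    have := hmax (j-1) (by omega) h3
    omega
  -- per-geodesic analysis
  have perq : ∀ q : G.Walk u v, q.length = G.dist u v →
      (R (p0.getVert (js+1), false) ∧ p0.getVert (js+1) ∈ q.support) ∨
      (p0.getVert js ∈ q.support ∧ p0.getVert (js+1) ∈ q.support) := by
    intro q hq
    have hqlen : q.length = p0.length := by rw [hq, hp0]
    have hwd : ∀ m, m ≤ q.length →
        G.dist u (q.getVert m) = m ∧ G.dist (q.getVert m) v = q.length - m :=
      fun m hm => geo_getVert hG q hq hm
    set Q : ℕ → Prop := fun m => R (q.getVert m, true) with hQdef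
    have hQ0 : Q 0 := by rw [hQdef]; simpa [q.getVert_zero] using hRu
    set ms : ℕ := Nat.findGreatest Q q.length with hmsdef
    have hms : Q ms := Nat.findGreatest_spec (Nat.zero_le _) hQ0
    have hmsle : ms ≤ q.length := Nat.findGreatest_le _
    have hmslt : ms < q.length := by
      rcases Nat.lt_or_ge ms q.length with h | h
      · exact h
      · exfalso
        have : ms = q.length := by omega
        rw [hQdef, this, q.getVert_length] at hms
        exact hnRvt hms
    have ha : R (q.getVert ms, true) := hms
    have hnb : ¬ R (q.getVert (ms+1), true) := by
      intro h
      have h2 := Nat.le_findGreatest (P := Q) (n := q.length)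
        (show ms + 1 ≤ q.length by omega) (h : Q (ms + 1))
      rw [← hmsdef] at h2
      omega
    by_cases hpe : pE p0 (q.getVert ms) (q.getVert (ms+1))
    · obtain ⟨k, hk, hka, hkb⟩ := hpe
      have hdk := (hxd k (by omega)).1
      have hdm := (hwd ms (by omega)).1
      have hkm : k = ms := by rw [hka] at hdk; omega
      rw [hkm] at hka hkb hk
      have hms_le_js : ms ≤ js :=
        hmax ms (by omega) (show R (p0.getVert ms, true) by rw [hka]; exact ha)
      have hjs_le_ms : js ≤ ms := by
        by_contra hcon
        push_neg at hcon
        have h2 : R (p0.getVert (ms+1), true) := hRj (ms+1) (by omega)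
        rw [hkb] at h2
        exact hnb h2
      right
      constructor
      · rw [Walk.mem_support_iff_exists_getVert]
        exact ⟨ms, by rw [show js = ms by omega]; exact hka.symm, by omega⟩
      · rw [Walk.mem_support_iff_exists_getVert]
        exact ⟨ms + 1, by rw [show js = ms by omega]; exact hkb.symm, by omega⟩
    · have hstepq := geo_step hG q hq (m := ms) hmslt
      have hres : res G u v p0 (q.getVert ms, true) (q.getVert (ms+1), false) :=
        Or.inl ⟨rfl, rfl, Or.inl ⟨hstepq, hpe⟩⟩
      have hRb : R (q.getVert (ms+1), false) := ha.tail hres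
      have hms1 : ms + 1 < q.length := by
        rcases Nat.lt_or_ge (ms+1) q.length with h | h
        · exact h
        · exfalso
          have : ms + 1 = q.length := by omega
          rw [this, q.getVert_length] at hRb
          exact hNR hRb
      have hint : interiorP p0 (q.getVert (ms+1)) := by
        by_contra hcon
        exact hnb (hRb.tail (arc2 _ hcon))
      obtain ⟨j, hj0, hjlen, hjeq⟩ := hint
      have hjjs : j = js + 1 := by
        rcases Nat.lt_or_ge js j with h | h
        · rcases Nat.lt_or_ge j (js + 2) with h' | h'
          · omega
          · exfalso
            exact hnot2 j h' (by omega) (by rwa [hjeq])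
        · exfalso
          have := hRj j h
          rw [hjeq] at this
          exact hnb this
      subst hjjs
      left
      constructor
      · rwa [hjeq]
      · rw [Walk.mem_support_iff_exists_getVert]
        exact ⟨ms + 1, hjeq.symm, by omega⟩
  -- extract the single cut vertex
  by_cases hRf : R (p0.getVert (js+1), false)
  · have hjs1 : js + 1 < p0.length := by
      rcases Nat.lt_or_ge (js+1) p0.length with h | h
      · exact h
      · exfalso
        have : js + 1 = p0.length := by omega
        rw [this, hxlen] at hRf
        exact hNR hRf
    refine ⟨p0.getVert (js+1), ?_, ?_, ?_⟩
    · intro h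
      have := (hxd (js+1) (by omega)).1
      rw [h] at this
      simp [SimpleGraph.dist_self] at this
    · intro h
      have := xinj (js+1) p0.length (by omega) (le_refl _) (by rw [h, hxlen])
      omega
    · intro q hq
      rcases perq q hq with ⟨_, hmem⟩ | ⟨_, hmem⟩ <;> exact hmem
  · rcases Nat.eq_zero_or_pos js with hjs0 | hjspos
    · refine ⟨p0.getVert (js+1), ?_, ?_, ?_⟩
      · intro h
        have := (hxd (js+1) (by omega)).1
        rw [h] at this
        simp [SimpleGraph.dist_self] at this
      · intro h
        have := xinj (js+1) p0.length (by omega) (le_refl _) (by rw [h, hxlen])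
        omega
      · intro q hq
        rcases perq q hq with ⟨hr, _⟩ | ⟨_, hmem⟩
        · exact absurd hr hRf
        · exact hmem
    · refine ⟨p0.getVert js, ?_, ?_, ?_⟩
      · intro h
        have := (hxd js (by omega)).1
        rw [h] at this
        simp [SimpleGraph.dist_self] at this
        omega
      · intro h
        have := xinj js p0.length (by omega) (le_refl _) (by rw [h, hxlen])
        omega
      · intro q hq
        rcases perq q hq with ⟨hr, _⟩ | ⟨hmem, _⟩
        · exact absurd hr hRf
        · exact hmem

end cut


/-- `t` immediately follows `s` in the list `L`. -/
def succIn {α : Type*} (L : List α) (s t : α) : Prop :=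
  ∃ i, i + 1 < L.length ∧ L[i]? = some s ∧ L[i+1]? = some t

section listlemmas

variable {α : Type*} {r : α → α → Prop} {L : List α} {s t s' t' : α}

lemma succIn.rel (hc : List.Chain' r L) (h : succIn L s t) : r s t := by
  obtain ⟨i, hi, hs, ht⟩ := h
  rw [List.getElem?_eq_some_iff] at hs ht
  obtain ⟨h1, hs⟩ := hs; obtain ⟨h2, ht⟩ := ht
  have := List.isChain_iff_getElem.mp hc i (by omega)
  simpa [List.get_eq_getElem, hs, ht] using this

lemma succIn.mem_left (h : succIn L s t) : s ∈ L := by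
  obtain ⟨i, hi, hs, _⟩ := h
  rw [List.getElem?_eq_some_iff] at hs
  obtain ⟨h1, hs⟩ := hs
  exact hs ▸ List.getElem_mem h1

lemma succIn.mem_right (h : succIn L s t) : t ∈ L := by
  obtain ⟨i, hi, _, ht⟩ := h
  rw [List.getElem?_eq_some_iff] at ht
  obtain ⟨h1, ht⟩ := ht
  exact ht ▸ List.getElem_mem h1

lemma exists_succ (hne : L ≠ []) (hs : s ∈ L) (h : s ≠ L.getLast hne) :
    ∃ t, succIn L s t := by
  obtain ⟨i, hi, rfl⟩ := List.mem_iff_getElem.mp hs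
  have hlen : 0 < L.length := List.length_pos_iff.mpr hne
  by_cases hi1 : i + 1 < L.length
  · exact ⟨L[i+1], i, hi1, List.getElem?_eq_getElem hi, List.getElem?_eq_getElem hi1⟩
  · exfalso; apply h
    rw [List.getLast_eq_getElem]
    congr 1; omega

lemma exists_pred (hne : L ≠ []) (ht : t ∈ L) (h : t ≠ L.head hne) :
    ∃ s, succIn L s t := by
  obtain ⟨i, hi, rfl⟩ := List.mem_iff_getElem.mp ht
  have hlen : 0 < L.length := List.length_pos_iff.mpr hne
  rcases Nat.eq_zero_or_pos i with h0 | h0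
  · exfalso; apply h; subst h0; rw [List.head_eq_getElem_zero]
  · refine ⟨L[i-1]'(by omega), i - 1, by omega, List.getElem?_eq_getElem (by omega), ?_⟩
    have : i - 1 + 1 = i := by omega
    rw [this]; exact List.getElem?_eq_getElem hi

lemma succIn.in_unique (hnd : L.Nodup) (h : succIn L s t) (h' : succIn L s' t) : s = s' := by
  obtain ⟨i, hi, hs, ht⟩ := h
  obtain ⟨j, hj, hs', ht'⟩ := h'
  rw [List.getElem?_eq_some_iff] at hs ht hs' ht'
  obtain ⟨hi1, hs⟩ := hs; obtain ⟨hi2, ht⟩ := ht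
  obtain ⟨hj1, hs'⟩ := hs'; obtain ⟨hj2, ht'⟩ := ht'
  have : i + 1 = j + 1 := hnd.getElem_inj_iff.mp (by rw [ht, ht'])
  have hij : i = j := by omega
  subst hij; rw [← hs, ← hs']

lemma succIn.out_unique (hnd : L.Nodup) (h : succIn L s t) (h' : succIn L s t') : t = t' := by
  obtain ⟨i, hi, hs, ht⟩ := h
  obtain ⟨j, hj, hs', ht'⟩ := h'
  rw [List.getElem?_eq_some_iff] at hs ht hs' ht'
  obtain ⟨hi1, hs⟩ := hs; obtain ⟨hi2, ht⟩ := ht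
  obtain ⟨hj1, hs'⟩ := hs'; obtain ⟨hj2, ht'⟩ := ht'
  have hij : i = j := hnd.getElem_inj_iff.mp (by rw [hs, hs'])
  subst hij; rw [← ht, ← ht']

lemma not_succIn_head (hnd : L.Nodup) (hne : L ≠ []) : ¬ succIn L s (L.head hne) := by
  rintro ⟨i, hi, hs, ht⟩
  rw [List.getElem?_eq_some_iff] at ht
  obtain ⟨hi2, ht⟩ := ht
  rw [List.head_eq_getElem_zero hne] at ht
  have : i + 1 = 0 := hnd.getElem_inj_iff.mp ht
  omega

lemma not_succIn_last (hnd : L.Nodup) (hne : L ≠ []) : ¬ succIn L (L.getLast hne) t := by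
  rintro ⟨i, hi, hs, ht⟩
  rw [List.getElem?_eq_some_iff] at hs
  obtain ⟨hi1, hs⟩ := hs
  rw [List.getLast_eq_getElem] at hs
  have : i = L.length - 1 := hnd.getElem_inj_iff.mp hs
  omega

end listlemmas

lemma exists_nodup_chain {α : Type*} {r : α → α → Prop} {a b : α}
    (h : Relation.ReflTransGen r a b) :
    ∃ l : List α, List.Chain r a l ∧ (a :: l).getLast (List.cons_ne_nil a l) = b ∧
      (a :: l).Nodup := by
  induction h with
  | refl => exact ⟨[], List.Chain.nil, rfl, List.nodup_singleton a⟩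
  | @tail c c' hac hcc' ih =>
    obtain ⟨l, hchain, hlast, hnd⟩ := ih
    by_cases hmem : c' ∈ a :: l
    · obtain ⟨l₁, l₂, hsplit⟩ := List.append_of_mem hmem
      cases l₁ with
      | nil =>
        simp only [List.nil_append, List.cons.injEq] at hsplit
        exact ⟨[], List.Chain.nil, by simpa using hsplit.1, List.nodup_singleton a⟩
      | cons a'' l₁' =>
        simp only [List.cons_append, List.cons.injEq] at hsplit
        obtain ⟨ha, hl⟩ := hsplit
        refine ⟨l₁' ++ [c'], ?_, ?_, ?_⟩
        · rw [hl] at hchain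
          exact (List.isChain_cons_split.mp hchain).1
        · exact List.getLast_append_singleton (a :: l₁')
        · refine hnd.sublist ?_
          rw [hl]
          refine List.cons_sublist_cons.mpr ?_
          exact List.append_sublist_append_left l₁' |>.mpr
            (List.cons_sublist_cons.mpr (List.nil_sublist l₂))
    · refine ⟨l ++ [c'], ?_, ?_, ?_⟩
      · have h1 : List.Chain' r ((a :: l) ++ [c']) := by
          refine List.IsChain.append hchain (List.isChain_singleton c') ?_
          intro x hx y hy
          simp only [List.head?_cons, Option.mem_def, Option.some.injEq] at hy
          rw [List.getLast?_eq_getLast (List.cons_ne_nil a l), Option.mem_def,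
            Option.some.injEq] at hx
          rw [← hy, ← hx, hlast]
          exact hcc'
        exact h1
      · exact List.getLast_append_singleton (a :: l)
      · rw [show a :: (l ++ [c']) = (a :: l) ++ [c'] from rfl]
        exact hnd.append (List.nodup_singleton c') (by simpa using hmem)

lemma aug_case (hG : G.Connected) (huv : u ≠ v) (p0 : G.Walk u v)
    (hp0 : p0.length = G.dist u v) (hd2 : 2 ≤ G.dist u v)
    (hA : Relation.ReflTransGen (res G u v p0) (u, true) (v, false)) :
    ∃ p q : G.Walk u v, p.IsPath ∧ q.IsPath ∧
      p.length = G.dist u v ∧ q.length = G.dist u v ∧ p ≠ q ∧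
      (∀ x : V, (x ∈ p.support ∧ x ∈ q.support) ↔ (x = u ∨ x = v)) := by
  classical
  obtain ⟨l, hchain, hlast, hnd⟩ := exists_nodup_chain hA
  set L : List (V × Bool) := (u, true) :: l with hLdef
  have hne : L ≠ [] := List.cons_ne_nil _ _
  have hchain' : List.Chain' (res G u v p0) L := hchain
  have hheadL : L.head hne = (u, true) := rfl
  have hlastL : L.getLast hne = (v, false) := hlast
  have hxd : ∀ j, j ≤ p0.length →
      G.dist u (p0.getVert j) = j ∧ G.dist (p0.getVert j) v = p0.length - j :=
    fun j hj => geo_getVert hG p0 hp0 hj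
  have hx0 : p0.getVert 0 = u := p0.getVert_zero
  have hxlen : p0.getVert p0.length = v := p0.getVert_length
  have hlen2 : 2 ≤ p0.length := by omega
  have xinj : ∀ j k, j ≤ p0.length → k ≤ p0.length → p0.getVert j = p0.getVert k → j = k := by
    intro j k hj hk he
    have h1 := (hxd j hj).1
    have h2 := (hxd k hk).1
    rw [he] at h1; omega
  have harc : ∀ s t, succIn L s t → res G u v p0 s t := fun s t h => h.rel hchain'
  have hout_t : ∀ (w : V) (t : V × Bool), succIn L (w, true) t → ∃ c, t = (c, false) := by
    intro w t h
    obtain ⟨c, bc⟩ := t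
    cases bc
    · exact ⟨c, rfl⟩
    · rcases harc _ _ h with ⟨_, h2, _⟩ | ⟨h1, _, _⟩
      · simp at h2
      · simp at h1
  have hout_f : ∀ (w : V) (t : V × Bool), succIn L (w, false) t → ∃ c, t = (c, true) := by
    intro w t h
    obtain ⟨c, bc⟩ := t
    cases bc
    · rcases harc _ _ h with ⟨h1, _, _⟩ | ⟨_, h2, _⟩
      · simp at h1
      · simp at h2
    · exact ⟨c, rfl⟩
  have harc_tf : ∀ a b, succIn L (a, true) (b, false) →
      (stepG G u v a b ∧ ¬ pE p0 a b) ∨ (a = b ∧ interiorP p0 a) := by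
    intro a b h
    rcases harc _ _ h with ⟨_, _, hh⟩ | ⟨h1, _, _⟩
    · exact hh
    · simp at h1
  have harc_ft : ∀ a b, succIn L (a, false) (b, true) →
      (a = b ∧ ¬ interiorP p0 a) ∨ pE p0 b a := by
    intro a b h
    rcases harc _ _ h with ⟨h1, _, _⟩ | ⟨_, _, hh⟩
    · simp at h1
    · exact hh
  -- basic facts about edges of p0
  have pE_step : ∀ a b, pE p0 a b → stepG G u v a b := by
    rintro a b ⟨j, hj, hja, hjb⟩
    have := geo_step hG p0 hp0 (m := j) (by omega)
    rwa [hja, hjb] at this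
  have pE_ne : ∀ a b, pE p0 a b → a ≠ b := by
    intro a b hpe heq
    obtain ⟨_, _, _, hd'⟩ := pE_step a b hpe
    rw [heq] at hd'
    omega
  have pE_in_unique : ∀ a a' w, pE p0 a w → pE p0 a' w → a = a' := by
    rintro a a' w ⟨j, hj, hja, hjw⟩ ⟨k, hk, hka, hkw⟩
    have : j + 1 = k + 1 := xinj _ _ (by omega) (by omega) (by rw [hjw, hkw])
    have hjk : j = k := by omega
    rw [← hja, ← hka, hjk]
  have pE_interior : ∀ a w, pE p0 a w → w ≠ v →
      ∃ j, j + 1 < p0.length ∧ p0.getVert (j+1) = w ∧ p0.getVert j = a := by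
    rintro a w ⟨j, hj, hja, hjw⟩ hwv
    refine ⟨j, ?_, hjw, hja⟩
    rcases Nat.lt_or_ge (j+1) p0.length with h | h
    · exact h
    · exfalso
      have : j + 1 = p0.length := by omega
      rw [this, hxlen] at hjw
      exact hwv hjw.symm
  -- the flow edge set
  set Fe : V → V → Prop := fun a b => a ≠ b ∧ succIn L (a, true) (b, false) with hFedef
  set Be : V → V → Prop := fun a b => a ≠ b ∧ succIn L (b, false) (a, true) with hBedef
  set g : V → V → Prop := fun a b => (pE p0 a b ∨ Fe a b) ∧ ¬ Be a b with hgdef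
  have hstepg : ∀ a b, g a b → stepG G u v a b := by
    rintro a b ⟨hpf, _⟩
    rcases hpf with hpe | ⟨hneq, hsi⟩
    · exact pE_step a b hpe
    · rcases harc_tf a b hsi with ⟨hstep, _⟩ | ⟨heq, _⟩
      · exact hstep
      · exact absurd heq hneq
  -- P1 : two distinct out-edges at u
  have hP1 : ∃ b1 b2, b1 ≠ b2 ∧ g u b1 ∧ g u b2 := by
    have hhm : (u, true) ∈ L := List.mem_cons_self
    obtain ⟨t, ht⟩ := exists_succ hne hhm (by rw [hlastL]; simp)
    obtain ⟨b, rfl⟩ := hout_t u t ht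
    rcases harc_tf u b ht with ⟨hstep, hnpe⟩ | ⟨heq, hint⟩
    · have hbu : u ≠ b := by
        intro heq
        have := hstep.2.2.2
        rw [← heq] at this
        simp [SimpleGraph.dist_self] at this
      have hgb : g u b := by
        refine ⟨Or.inr ⟨hbu, ht⟩, ?_⟩
        rintro ⟨_, hsi⟩
        exact not_succIn_head hnd hne hsi
      have hgx1 : g u (p0.getVert 1) := by
        refine ⟨Or.inl ⟨0, by omega, hx0, rfl⟩, ?_⟩
        rintro ⟨_, hsi⟩
        exact not_succIn_head hnd hne hsi
      refine ⟨p0.getVert 1, b, ?_, hgx1, hgb⟩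
      intro h
      exact hnpe ⟨0, by omega, hx0, by rw [h]⟩
    · exfalso
      obtain ⟨j, hj0, hjl, hjeq⟩ := hint
      have := (hxd j (le_of_lt hjl)).1
      rw [hjeq] at this
      simp [SimpleGraph.dist_self] at this
      omega
  -- mixed in-edges are impossible
  have hmix : ∀ a a' w, w ≠ v → pE p0 a w → ¬ Be a w → Fe a' w → False := by
    intro a a' w hwv hpe hnbe hfe
    have hmem : (w, false) ∈ L := hfe.2.mem_right
    obtain ⟨t, ht⟩ := exists_succ hne hmem (by rw [hlastL]; simp [Prod.ext_iff, hwv])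
    obtain ⟨c, rfl⟩ := hout_f w t ht
    rcases harc_ft w c ht with ⟨_, hnint⟩ | hpec
    · obtain ⟨j, hj, hjw, _⟩ := pE_interior a w hpe hwv
      exact hnint ⟨j+1, by omega, hj, hjw⟩
    · have hca : c = a := pE_in_unique c a w hpec hpe
      exact hnbe ⟨pE_ne a w hpe, by rw [← hca]; exact ht⟩
  have hP3core : ∀ w a a', w ≠ v → g a w → g a' w → a = a' := by
    intro w a a' hwv ha ha'
    rcases ha.1 with hpe | hfe <;> rcases ha'.1 with hpe' | hfe'
    · exact pE_in_unique a a' w hpe hpe'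
    · exact (hmix a a' w hwv hpe ha.2 hfe').elim
    · exact (hmix a' a w hwv hpe' ha'.2 hfe).elim
    · have := succIn.in_unique hnd hfe.2 hfe'.2
      rw [Prod.mk.injEq] at this
      exact this.1
  -- helper: continue the flow out of `(w,true)`
  have hfromWT : ∀ (w : V) (s0 : V × Bool), succIn L s0 (w, true) →
      (¬ succIn L (w, true) (w, false)) → ∃ b, Fe w b ∧ ¬ pE p0 w b := by
    intro w s0 hin hnoarc4
    have hmem : (w, true) ∈ L := hin.mem_right
    obtain ⟨t, ht⟩ := exists_succ hne hmem (by rw [hlastL]; simp)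
    obtain ⟨b, rfl⟩ := hout_t w t ht
    rcases harc_tf w b ht with ⟨hstep, hnpe⟩ | ⟨heq, _⟩
    · refine ⟨b, ⟨?_, ht⟩, hnpe⟩
      intro heq
      have := hstep.2.2.2
      rw [← heq] at this
      omega
    · exfalso
      rw [← heq] at ht
      exact hnoarc4 ht
  have hP2 : ∀ w a, w ≠ u → w ≠ v → g a w → ∃ b, g w b := by
    intro w a hwu hwv hga
    rcases hga.1 with hpe | hfe
    · -- in-edge is a p0-edge
      obtain ⟨j, hjlt, hjw, hja⟩ := pE_interior a w hpe hwv
      have hpenext : pE p0 w (p0.getVert (j+2)) := ⟨j+1, by omega, hjw, rfl⟩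
      by_cases hbe : Be w (p0.getVert (j+2))
      · obtain ⟨hne2, hsi⟩ := hbe
        by_cases h4 : succIn L (w, true) (w, false)
        · exfalso
          have hmem : (w, false) ∈ L := h4.mem_right
          obtain ⟨t, ht⟩ := exists_succ hne hmem (by rw [hlastL]; simp [Prod.ext_iff, hwv])
          obtain ⟨c, rfl⟩ := hout_f w t ht
          rcases harc_ft w c ht with ⟨_, hnint⟩ | hpec
          · exact hnint ⟨j+1, by omega, by omega, hjw⟩
          · have hca : c = a := pE_in_unique c a w hpec hpe
            exact hga.2 ⟨pE_ne a w hpe, by rw [← hca]; exact ht⟩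
        · obtain ⟨b, hfeb, hnpeb⟩ := hfromWT w _ hsi h4
          refine ⟨b, Or.inr hfeb, ?_⟩
          rintro ⟨hne', hsi'⟩
          have := succIn.in_unique hnd hsi' hsi
          rw [Prod.mk.injEq] at this
          exact hnpeb (this.1 ▸ hpenext)
      · exact ⟨_, Or.inl hpenext, hbe⟩
    · -- in-edge is a new edge
      have hmem : (w, false) ∈ L := hfe.2.mem_right
      obtain ⟨t, ht⟩ := exists_succ hne hmem (by rw [hlastL]; simp [Prod.ext_iff, hwv])
      obtain ⟨c, rfl⟩ := hout_f w t ht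
      rcases harc_ft w c ht with ⟨hceq, hnint⟩ | hpec
      · -- the vertex arc at w is free
        rw [← hceq] at ht
        by_cases h4 : succIn L (w, true) (w, false)
        · exfalso
          have := succIn.in_unique hnd h4 hfe.2
          rw [Prod.mk.injEq] at this
          exact hfe.1 this.1.symm
        · obtain ⟨b, hfeb, hnpeb⟩ := hfromWT w _ ht h4
          refine ⟨b, Or.inr hfeb, ?_⟩
          rintro ⟨hne', hsi'⟩
          have := succIn.in_unique hnd hsi' ht
          rw [Prod.mk.injEq] at this
          exact hne' this.1.symm
      · -- the walk leaves (w,false) backwards along p0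
        obtain ⟨k, hk, hkc, hkw⟩ := hpec
        have hk1 : k + 1 < p0.length := by
          rcases Nat.lt_or_ge (k+1) p0.length with h | h
          · exact h
          · exfalso
            have : k + 1 = p0.length := by omega
            rw [this, hxlen] at hkw
            exact hwv hkw.symm
        have hpenext : pE p0 w (p0.getVert (k+2)) := ⟨k+1, by omega, hkw, rfl⟩
        by_cases hbe : Be w (p0.getVert (k+2))
        · obtain ⟨hne2, hsi⟩ := hbe
          by_cases h4 : succIn L (w, true) (w, false)
          · exfalso
            have := succIn.in_unique hnd h4 hfe.2
            rw [Prod.mk.injEq] at this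
            exact hfe.1 this.1.symm
          · obtain ⟨b, hfeb, hnpeb⟩ := hfromWT w _ hsi h4
            refine ⟨b, Or.inr hfeb, ?_⟩
            rintro ⟨hne', hsi'⟩
            have := succIn.in_unique hnd hsi' hsi
            rw [Prod.mk.injEq] at this
            exact hnpeb (this.1 ▸ hpenext)
        · exact ⟨_, Or.inl hpenext, hbe⟩
  have hP3 : ∀ w a a', w ≠ v → g a w → g a' w → a = a' := by
    intro w a a' hwv ha ha'
    by_cases hwu : w = u
    · exfalso
      have := (hstepg _ _ ha).2.2.2
      rw [hwu] at this
      simp [SimpleGraph.dist_self] at this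
    · exact hP3core w a a' hwv ha ha'
  exact decomp hG huv hd2 g hstepg hP1 hP2 hP3

end StressAux

/-- In a connected finite graph, `S(u,v) = {u,v}` iff `uv` is an edge
or there are two internally disjoint shortest `u,v`-paths. -/
theorem stressInterval_eq_pair_iff {V : Type*} [Fintype V]
    (G : SimpleGraph V) (hG : G.Connected) (u v : V) (huv : u ≠ v) :
    G.stressInterval u v = {u, v} ↔
      (G.Adj u v ∨
        ∃ p q : G.Walk u v, p.IsPath ∧ q.IsPath ∧
          p.length = G.dist u v ∧ q.length = G.dist u v ∧ p ≠ q ∧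
          (∀ x : V, (x ∈ p.support ∧ x ∈ q.support) ↔ (x = u ∨ x = v))) := by
  constructor
  · intro hS
    by_cases hadj : G.Adj u v
    · exact Or.inl hadj
    · right
      have hd1 : G.dist u v ≠ 1 := fun h => hadj (SimpleGraph.dist_eq_one_iff_adj.mp h)
      have hdpos : 0 < G.dist u v := hG.pos_dist_of_ne huv
      have hd2 : 2 ≤ G.dist u v := by omega
      obtain ⟨p0, hp0path, hp0len⟩ := hG.exists_path_of_dist u v
      by_cases hA : Relation.ReflTransGen (StressAux.res G u v p0) (u, true) (v, false)
      · exact StressAux.aug_case hG huv p0 hp0len hd2 hA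
      · exfalso
        obtain ⟨c, hcu, hcv, hall⟩ := StressAux.cut_case hG huv p0 hp0len hd2 hA
        have hcS : c ∈ G.stressInterval u v := by
          refine ⟨hG.preconnected u v, ?_⟩
          intro q hq hlen
          exact hall q hlen
        rw [hS] at hcS
        simp only [Set.mem_insert_iff, Set.mem_singleton_iff] at hcS
        rcases hcS with h | h
        · exact hcu h
        · exact hcv h
  · intro h
    apply Set.eq_of_subset_of_subset
    · intro x hx
      have hx2 := hx.2
      rcases h with hadj | ⟨p, q, hp, hq, hplen, hqlen, hpq, hsupp⟩
      · have hdist : G.dist u v = 1 := SimpleGraph.dist_eq_one_iff_adj.mpr hadj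
        have hmem := hx2 (SimpleGraph.Walk.cons hadj SimpleGraph.Walk.nil)
          (by simp [SimpleGraph.Walk.isPath_def, huv]) (by simp [hdist])
        simp only [SimpleGraph.Walk.support_cons, SimpleGraph.Walk.support_nil,
          List.mem_cons, List.mem_singleton] at hmem
        simp only [Set.mem_insert_iff, Set.mem_singleton_iff]
        rcases hmem with h1 | h1 | h1
        · exact Or.inl h1
        · exact Or.inr h1
        · exact absurd h1 (by simp)
      · have h1 := hx2 p hp hplen
        have h2 := hx2 q hq hqlen
        have h3 := (hsupp x).mp ⟨h1, h2⟩
        simp only [Set.mem_insert_iff, Set.mem_singleton_iff]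
        exact h3
    · intro x hx
      have hreach : G.Reachable u v := hG.preconnected u v
      simp only [Set.mem_insert_iff, Set.mem_singleton_iff] at hx
      rcases hx with rfl | rfl
      · exact ⟨hreach, fun p _ _ => p.start_mem_support⟩
      · exact ⟨hreach, fun p _ _ => p.end_mem_support⟩
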